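/- For any three distinct unit vectors $v_1, v_2, v_3$ in $\mathbb{R}^2$, the Coulomb interaction satisfies $\frac{1}{|v_2 - v_1|} + \frac{1}{|v_3 - v_2|} + \frac{1}{|v_1 - v_3|} \geq \sqrt{3}$, with equality if and only if the triangle with vertices $v_1, v_2, v_3$ is equilateral. -/

import Mathlib

/-- The Gram determinant of three unit vectors in `ℝ²` vanishes. -/
lemma coulomb_gram2_aux (a1 a2 b1 b2 c1 c2 : ℝ) (e1 : a1^2+a2^2 = 1) (e2 : b1^2+b2^2 = 1)
    (e3 : c1^2+c2^2 = 1) :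
    1 + 2*(a1*b1+a2*b2)*(a1*c1+a2*c2)*(b1*c1+b2*c2)
      - (a1*b1+a2*b2)^2 - (a1*c1+a2*c2)^2 - (b1*c1+b2*c2)^2 = 0 := by
  linear_combination ((b1*c1+b2*c2)^2 - 1) * e1
    + ((a1*c1+a2*c2)^2 - (a1^2+a2^2)) * e2
    + ((a1*b1+a2*b2)^2 - (a1^2+a2^2)*(b1^2+b2^2)) * e3

set_option maxHeartbeats 1000000 in
/-- The scalar core of the Coulomb inequality for chords of the unit circle. -/
lemma coulomb_scalar_aux (x y z s : ℝ) (hx : 0 < x) (hy : 0 < y) (hz : 0 < z)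
    (hs : s^2 = 3) (hs0 : 0 < s)
    (hxy : z ≤ x + y) (hyz : x ≤ y + z) (hzx : y ≤ z + x)
    (hC : x^2*y^2*z^2 + (x^2*x^2 + y^2*y^2 + z^2*z^2)
        = 2*(x^2*y^2 + y^2*z^2 + z^2*x^2)) :
    s ≤ 1/x + 1/y + 1/z ∧ (1/x + 1/y + 1/z = s ↔ x = y ∧ y = z) := by
  have hT1 : 0 < (3/2)*(x+y)^2 - z^2 := by nlinarith
  have hT2 : 0 < (3/2)*(y+z)^2 - x^2 := by nlinarith
  have hT3 : 0 < (3/2)*(z+x)^2 - y^2 := by nlinarith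
  have key : (x*y+y*z+z*x)^2 - 3*(x*y*z)^2 =
      (x-y)^2*((3/2)*(x+y)^2 - z^2) + (y-z)^2*((3/2)*(y+z)^2 - x^2)
        + (z-x)^2*((3/2)*(z+x)^2 - y^2) := by linear_combination (-3)*hC
  have hF : 0 ≤ (x-y)^2*((3/2)*(x+y)^2 - z^2) + (y-z)^2*((3/2)*(y+z)^2 - x^2)
      + (z-x)^2*((3/2)*(z+x)^2 - y^2) := by positivity
  have hxyz : 0 < x*y*z := by positivity
  have hS : 0 < x*y+y*z+z*x := by positivity
  have h2 : (s*(x*y*z))^2 ≤ (x*y+y*z+z*x)^2 := by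
    have h3 : (s*(x*y*z))^2 = 3*(x*y*z)^2 := by linear_combination (x*y*z)^2 * hs
    linarith [key, hF, h3]
  have hmain : s*(x*y*z) ≤ x*y+y*z+z*x := le_of_pow_le_pow_left₀ two_ne_zero hS.le h2
  have hsum_eq : 1/x + 1/y + 1/z = (x*y+y*z+z*x)/(x*y*z) := by
    field_simp; ring
  constructor
  · rw [hsum_eq, le_div_iff₀ hxyz]; linarith [hmain]
  constructor
  · intro heq
    have heq' : x*y+y*z+z*x = s*(x*y*z) := by
      rw [hsum_eq, div_eq_iff (ne_of_gt hxyz)] at heq; exact heq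
    have hF0 : (x-y)^2*((3/2)*(x+y)^2 - z^2) + (y-z)^2*((3/2)*(y+z)^2 - x^2)
        + (z-x)^2*((3/2)*(z+x)^2 - y^2) = 0 := by
      linear_combination (-1)*key + (x*y+y*z+z*x + s*(x*y*z))*heq' + (x*y*z)^2*hs
    have n1 : 0 ≤ (x-y)^2*((3/2)*(x+y)^2 - z^2) := by positivity
    have n2 : 0 ≤ (y-z)^2*((3/2)*(y+z)^2 - x^2) := by positivity
    have n3 : 0 ≤ (z-x)^2*((3/2)*(z+x)^2 - y^2) := by positivity
    have e1 : (x-y)^2*((3/2)*(x+y)^2 - z^2) = 0 := by linarith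
    have e2 : (y-z)^2*((3/2)*(y+z)^2 - x^2) = 0 := by linarith
    have q1 : (x-y)^2 = 0 := by
      rcases mul_eq_zero.mp e1 with h | h
      · exact h
      · exact absurd h (ne_of_gt hT1)
    have q2 : (y-z)^2 = 0 := by
      rcases mul_eq_zero.mp e2 with h | h
      · exact h
      · exact absurd h (ne_of_gt hT2)
    constructor
    · have h := sq_eq_zero_iff.mp q1
      linarith [h]
    · have h := sq_eq_zero_iff.mp q2
      linarith [h]
  · rintro ⟨h1, h2⟩
    subst h1; subst h2
    have h4 : x^2*x^2*(x^2 - 3) = 0 := by linear_combination hC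
    have hx3 : x^2 = 3 := by
      have hne : x^2*x^2 ≠ 0 := by positivity
      rcases mul_eq_zero.mp h4 with h | h
      · exact absurd h hne
      · linarith
    have hxs : x = s := by
      have h5 : (x - s)*(x + s) = 0 := by linear_combination hx3 - hs
      rcases mul_eq_zero.mp h5 with h | h
      · linarith
      · linarith
    rw [hxs]
    field_simp
    linear_combination (-1)*hs

/-- For three pairwise distinct unit vectors in `ℝ²`, the Coulomb interaction is
at least `√3`, with equality iff the triangle with these vertices is equilateral. -/
theorem coulomb_ge_sqrt_three (v1 v2 v3 : EuclideanSpace ℝ (Fin 2))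
    (h1 : ‖v1‖ = 1) (h2 : ‖v2‖ = 1) (h3 : ‖v3‖ = 1)
    (h12 : v1 ≠ v2) (h23 : v2 ≠ v3) (h13 : v1 ≠ v3) :
    Real.sqrt 3 ≤ 1 / ‖v2 - v1‖ + 1 / ‖v3 - v2‖ + 1 / ‖v1 - v3‖ ∧
    (1 / ‖v2 - v1‖ + 1 / ‖v3 - v2‖ + 1 / ‖v1 - v3‖ = Real.sqrt 3 ↔
      ‖v2 - v1‖ = ‖v3 - v2‖ ∧ ‖v3 - v2‖ = ‖v1 - v3‖) := by
  have hx : 0 < ‖v2 - v1‖ := norm_pos_iff.mpr (sub_ne_zero.mpr h12.symm)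
  have hy : 0 < ‖v3 - v2‖ := norm_pos_iff.mpr (sub_ne_zero.mpr h23.symm)
  have hz : 0 < ‖v1 - v3‖ := norm_pos_iff.mpr (sub_ne_zero.mpr h13)
  have hs : (Real.sqrt 3)^2 = 3 := Real.sq_sqrt (by norm_num)
  have hs0 : 0 < Real.sqrt 3 := Real.sqrt_pos.mpr (by norm_num)
  -- triangle inequalities
  have tri1 : ‖v1 - v3‖ ≤ ‖v2 - v1‖ + ‖v3 - v2‖ := by
    have e : v1 - v3 = -(v2 - v1) + -(v3 - v2) := by abel
    calc ‖v1 - v3‖ = ‖-(v2 - v1) + -(v3 - v2)‖ := by rw [e]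
      _ ≤ ‖-(v2 - v1)‖ + ‖-(v3 - v2)‖ := norm_add_le _ _
      _ = ‖v2 - v1‖ + ‖v3 - v2‖ := by rw [norm_neg, norm_neg]
  have tri2 : ‖v2 - v1‖ ≤ ‖v3 - v2‖ + ‖v1 - v3‖ := by
    have e : v2 - v1 = -(v3 - v2) + -(v1 - v3) := by abel
    calc ‖v2 - v1‖ = ‖-(v3 - v2) + -(v1 - v3)‖ := by rw [e]
      _ ≤ ‖-(v3 - v2)‖ + ‖-(v1 - v3)‖ := norm_add_le _ _
      _ = ‖v3 - v2‖ + ‖v1 - v3‖ := by rw [norm_neg, norm_neg]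
  have tri3 : ‖v3 - v2‖ ≤ ‖v1 - v3‖ + ‖v2 - v1‖ := by
    have e : v3 - v2 = -(v1 - v3) + -(v2 - v1) := by abel
    calc ‖v3 - v2‖ = ‖-(v1 - v3) + -(v2 - v1)‖ := by rw [e]
      _ ≤ ‖-(v1 - v3)‖ + ‖-(v2 - v1)‖ := norm_add_le _ _
      _ = ‖v1 - v3‖ + ‖v2 - v1‖ := by rw [norm_neg, norm_neg]
  -- inner products in coordinates
  have inner_coord : ∀ u v : EuclideanSpace ℝ (Fin 2),
      (inner ℝ u v : ℝ) = u 0 * v 0 + u 1 * v 1 := by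
    intro u v
    simp [PiLp.inner_apply, RCLike.inner_apply, Fin.sum_univ_two, mul_comm]
  have hp : ‖v2 - v1‖^2 = 2 - 2*(v1 0 * v2 0 + v1 1 * v2 1) := by
    have h := norm_sub_sq_real v2 v1
    rw [h1, h2, inner_coord v2 v1] at h
    linear_combination h
  have hr : ‖v3 - v2‖^2 = 2 - 2*(v2 0 * v3 0 + v2 1 * v3 1) := by
    have h := norm_sub_sq_real v3 v2
    rw [h2, h3, inner_coord v3 v2] at h
    linear_combination h
  have hq : ‖v1 - v3‖^2 = 2 - 2*(v1 0 * v3 0 + v1 1 * v3 1) := by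
    have h := norm_sub_sq_real v1 v3
    rw [h1, h3, inner_coord v1 v3] at h
    linear_combination h
  -- unit norms in coordinates
  have unit_coord : ∀ v : EuclideanSpace ℝ (Fin 2), ‖v‖ = 1 → v 0 ^2 + v 1 ^2 = 1 := by
    intro v hv
    have h := real_inner_self_eq_norm_sq v
    rw [hv, inner_coord v v] at h
    nlinarith [h]
  have e1 := unit_coord v1 h1
  have e2 := unit_coord v2 h2
  have e3 := unit_coord v3 h3
  have hgram := coulomb_gram2_aux (v1 0) (v1 1) (v2 0) (v2 1) (v3 0) (v3 1) e1 e2 e3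
  have hC : ‖v2 - v1‖^2*‖v3 - v2‖^2*‖v1 - v3‖^2
      + (‖v2 - v1‖^2*‖v2 - v1‖^2 + ‖v3 - v2‖^2*‖v3 - v2‖^2 + ‖v1 - v3‖^2*‖v1 - v3‖^2)
      = 2*(‖v2 - v1‖^2*‖v3 - v2‖^2 + ‖v3 - v2‖^2*‖v1 - v3‖^2 + ‖v1 - v3‖^2*‖v2 - v1‖^2) := by
    rw [hp, hr, hq]
    linear_combination (-4)*hgram
  exact coulomb_scalar_aux _ _ _ _ hx hy hz hs hs0 tri1 tri2 tri3 hC
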